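/- Let f = (α_f, σ_f) ∈ G_n and let τ ∈ Sₙ be an involution with τ σ_f τ⁻¹ = σ_f⁻¹. Then there exists an involution T ∈ G_n whose permutation part is τ and which reverses f (i.e. T² = identity, σ_T = τ and T f T⁻¹ = f⁻¹) if and only if for every i ∈ {1,…,n} one has ∑_{j ∈ S_i} α_j(f) + ∑_{j ∈ τ(S_i)} α_j(f) = 0 in 𝕋, where S_i denotes the σ_f-cycle of i. -/

import Mathlib

abbrev Circle1 : Type := AddCircle (1 : ℝ)

abbrev Gn (n : ℕ) : Type := (Fin n → Circle1) × Equiv.Perm (Fin n)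

namespace Gn
variable {n : ℕ}

noncomputable instance : Mul (Gn n) := ⟨fun f g => ⟨fun j => g.1 j + f.1 (g.2 j), f.2 * g.2⟩⟩
noncomputable instance : One (Gn n) := ⟨⟨fun _ => 0, 1⟩⟩
noncomputable instance : Inv (Gn n) := ⟨fun f => ⟨fun j => -f.1 (f.2⁻¹ j), f.2⁻¹⟩⟩

noncomputable instance : Group (Gn n) where
  mul_assoc f g h := Prod.ext (funext fun j => (add_assoc _ _ _).symm) rfl
  one_mul f := Prod.ext (funext fun j => add_zero _) (one_mul _)
  mul_one f := Prod.ext (funext fun j => zero_add _) (mul_one _)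
  inv_mul_cancel f := Prod.ext
    (funext fun j => show f.1 j + -f.1 (f.2⁻¹ (f.2 j)) = 0 by simp)
    (inv_mul_cancel _)

@[simp] lemma mul_fst (f g : Gn n) (j : Fin n) : (f * g).1 j = g.1 j + f.1 (g.2 j) := rfl
@[simp] lemma mul_snd (f g : Gn n) : (f * g).2 = f.2 * g.2 := rfl
@[simp] lemma one_fst (j : Fin n) : (1 : Gn n).1 j = 0 := rfl
@[simp] lemma one_snd : (1 : Gn n).2 = 1 := rfl
@[simp] lemma inv_fst (f : Gn n) (j : Fin n) : (f⁻¹).1 j = -f.1 (f.2⁻¹ j) := rfl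
@[simp] lemma inv_snd (f : Gn n) : (f⁻¹).2 = f.2⁻¹ := rfl


/-- The σ-cycle of `i`: the set `{σ^k i : k ∈ ℤ}` as a finset. -/
noncomputable def cycleFinset (σ : Equiv.Perm (Fin n)) (i : Fin n) : Finset (Fin n) :=
  @Finset.filter _ (fun j => ∃ k : ℤ, (σ ^ k) i = j) (Classical.decPred _) Finset.univ

end Gn

open Equiv Finset Gn

section Aux
variable {n : ℕ} {σ τ : Equiv.Perm (Fin n)}

lemma mem_cycleFinset' {i j : Fin n} : j ∈ cycleFinset σ i ↔ σ.SameCycle i j := by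
  simp [cycleFinset, Equiv.Perm.SameCycle]

lemma cycleFinset_eq' {i j : Fin n} (h : σ.SameCycle i j) :
    cycleFinset σ i = cycleFinset σ j := by
  ext x
  simp only [mem_cycleFinset']
  exact ⟨fun hx => h.symm.trans hx, fun hx => h.trans hx⟩

lemma self_mem_cycleFinset' (i : Fin n) : i ∈ cycleFinset σ i :=
  mem_cycleFinset'.2 (Equiv.Perm.SameCycle.refl _ _)

lemma sameCycle_apply' {x : Fin n} : σ.SameCycle x (σ x) := ⟨1, by simp⟩

lemma mem_cycle_apply_iff' {i x : Fin n} :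
    σ x ∈ cycleFinset σ i ↔ x ∈ cycleFinset σ i := by
  simp only [mem_cycleFinset']
  exact ⟨fun h => h.trans (sameCycle_apply').symm, fun h => h.trans sameCycle_apply'⟩

lemma sum_cycle_comp' (i : Fin n) (g : Fin n → Circle1) :
    ∑ j ∈ cycleFinset σ i, g (σ j) = ∑ j ∈ cycleFinset σ i, g j :=
  Finset.sum_equiv σ (fun _ => mem_cycle_apply_iff'.symm) (fun _ _ => rfl)

lemma sum_cycle_comp_inv' (i : Fin n) (g : Fin n → Circle1) :
    ∑ j ∈ cycleFinset σ i, g (σ⁻¹ j) = ∑ j ∈ cycleFinset σ i, g j := by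
  have h := sum_cycle_comp' (σ := σ) i (fun j => g (σ⁻¹ j))
  simp only [Equiv.Perm.coe_inv, Equiv.symm_apply_apply] at h
  exact h.symm

/-- conjugation by τ sends the cycle of i to the cycle of τ i. -/
lemma image_tau' (hrev : τ * σ * τ⁻¹ = σ⁻¹) (i : Fin n) :
    (cycleFinset σ i).image τ = cycleFinset σ (τ i) := by
  have hconj : ∀ k : ℤ, ∀ x : Fin n, τ ((σ ^ k) x) = (σ ^ (-k)) (τ x) := by
    intro k x
    have h1 : τ * σ ^ k * τ⁻¹ = σ ^ (-k) := by
      rw [← conj_zpow, hrev, inv_zpow, zpow_neg]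
    have := congrArg (fun p : Equiv.Perm (Fin n) => p (τ x)) h1
    simpa [Equiv.Perm.mul_apply] using this
  ext x
  simp only [Finset.mem_image, mem_cycleFinset']
  constructor
  · rintro ⟨y, ⟨k, rfl⟩, rfl⟩
    exact ⟨-k, (hconj k i).symm⟩
  · rintro ⟨k, rfl⟩
    exact ⟨(σ ^ (-k)) i, ⟨-k, rfl⟩, by rw [hconj (-k) i, neg_neg]⟩

lemma exists_half' (x : Circle1) : ∃ y : Circle1, y + y = x := by
  induction x using QuotientAddGroup.induction_on with
  | H r => exact ⟨((r / 2 : ℝ) : AddCircle (1 : ℝ)), by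
      rw [← AddCircle.coe_add]; norm_num⟩

lemma cycle_sum_eq' (f : Gn n) (hrev : τ * f.2 * τ⁻¹ = f.2⁻¹) (i : Fin n) :
    (∑ j ∈ cycleFinset f.2 i, f.1 j) + ∑ j ∈ (cycleFinset f.2 i).image τ, f.1 j
      = - ∑ j ∈ cycleFinset f.2 i, (-f.1 j - f.1 (f.2⁻¹ (τ j))) := by
  have hτinj : Function.Injective τ := τ.injective
  have h1 : ∑ j ∈ (cycleFinset f.2 i).image τ, f.1 j
      = ∑ j ∈ cycleFinset f.2 i, f.1 (f.2⁻¹ (τ j)) := by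
    calc ∑ j ∈ (cycleFinset f.2 i).image τ, f.1 j
        = ∑ j ∈ cycleFinset f.2 (τ i), f.1 j := by rw [image_tau' hrev]
      _ = ∑ j ∈ cycleFinset f.2 (τ i), f.1 (f.2⁻¹ j) := (sum_cycle_comp_inv' _ _).symm
      _ = ∑ j ∈ (cycleFinset f.2 i).image τ, f.1 (f.2⁻¹ j) := by rw [image_tau' hrev]
      _ = ∑ j ∈ cycleFinset f.2 i, f.1 (f.2⁻¹ (τ j)) :=
          Finset.sum_image (fun a _ b _ h => hτinj h)
  rw [h1, ← Finset.sum_add_distrib, ← Finset.sum_neg_distrib]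
  exact Finset.sum_congr rfl (fun j _ => by abel)

/-- Solution of the cohomological equation γ∘σ = γ + c, given that c sums to
zero along every cycle. -/
lemma exists_gamma' (c : Fin n → Circle1)
    (hsum : ∀ i, ∑ j ∈ cycleFinset σ i, c j = 0) :
    ∃ γ : Fin n → Circle1, ∀ j, γ (σ j) = γ j + c j := by
  classical
  have hne : ∀ j : Fin n, (cycleFinset σ j).Nonempty := fun j => ⟨j, self_mem_cycleFinset' j⟩
  have hrep_mem : ∀ j : Fin n, (cycleFinset σ j).min' (hne j) ∈ cycleFinset σ j :=
    fun j => Finset.min'_mem _ _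
  let rep : Fin n → Fin n := fun j => (cycleFinset σ j).min' (hne j)
  have hrep_same : ∀ j, σ.SameCycle (rep j) j := fun j =>
    (mem_cycleFinset'.1 (hrep_mem j)).symm
  have hrep_const : ∀ j j', σ.SameCycle j j' → rep j = rep j' := by
    intro j j' h
    have : cycleFinset σ j = cycleFinset σ j' := cycleFinset_eq' h
    simp only [rep]
    congr 1
  have hex : ∀ j : Fin n, ∃ k : ℕ, (σ ^ k) (rep j) = j := by
    intro j
    obtain ⟨k, -, hk⟩ := (hrep_same j).exists_pow_eq'
    exact ⟨k, hk⟩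
  let kk : Fin n → ℕ := fun j => Nat.find (hex j)
  have hkk_spec : ∀ j, (σ ^ kk j) (rep j) = j := fun j => Nat.find_spec (hex j)
  have hkk_min : ∀ j, ∀ m < kk j, (σ ^ m) (rep j) ≠ j := fun j m hm => Nat.find_min (hex j) hm
  refine ⟨fun j => ∑ m ∈ Finset.range (kk j), c ((σ ^ m) (rep j)), ?_⟩
  intro j
  show ∑ m ∈ Finset.range (kk (σ j)), c ((σ ^ m) (rep (σ j)))
      = (∑ m ∈ Finset.range (kk j), c ((σ ^ m) (rep j))) + c j
  have hrep_sj : rep (σ j) = rep j := (hrep_const _ _ sameCycle_apply').symm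
  have hk_spec : (σ ^ kk j) (rep j) = j := hkk_spec j
  have hsucc : (σ ^ (kk j + 1)) (rep j) = σ j := by
    rw [pow_succ', Equiv.Perm.mul_apply, hk_spec]
  by_cases hcase : kk (σ j) = kk j + 1
  · rw [hcase, hrep_sj, Finset.sum_range_succ, hk_spec]
  · have hle : kk (σ j) ≤ kk j + 1 := by
      apply Nat.find_le
      rw [hrep_sj]; exact hsucc
    have hksj : kk (σ j) = 0 := by
      by_contra h0
      obtain ⟨m, hm⟩ := Nat.exists_eq_succ_of_ne_zero h0
      have hm' : (σ ^ (m + 1)) (rep j) = σ j := by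
        have := hkk_spec (σ j); rwa [hm, hrep_sj] at this
      have hmj : (σ ^ m) (rep j) = j := by
        have := congrArg σ.symm hm'
        simpa [pow_succ', Equiv.Perm.mul_apply] using this
      have hmk : kk j ≤ m := le_of_not_gt (fun h => hkk_min j m h hmj)
      rw [hm] at hle
      omega
    have hwrap : σ j = rep j := by
      have := hkk_spec (σ j)
      rw [hksj, hrep_sj, pow_zero] at this
      simpa using this.symm
    rw [hksj, Finset.sum_range_zero]
    have hperiod : (σ ^ (kk j + 1)) (rep j) = rep j := by rw [hsucc, hwrap]
    have hinj : ∀ a ∈ Finset.range (kk j + 1), ∀ b ∈ Finset.range (kk j + 1),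
        (σ ^ a) (rep j) = (σ ^ b) (rep j) → a = b := by
      have key : ∀ a b, a < b → b < kk j + 1 → (σ ^ a) (rep j) = (σ ^ b) (rep j) → False := by
        intro a b hab hbk heq
        have hd : (σ ^ (b - a)) (rep j) = rep j := by
          have h2 : (σ ^ a) ((σ ^ (b - a)) (rep j)) = (σ ^ a) (rep j) := by
            rw [← Equiv.Perm.mul_apply, ← pow_add, Nat.add_sub_cancel' (le_of_lt hab), heq]
          exact (σ ^ a).injective h2
        have hkd : (σ ^ (kk j - (b - a))) (rep j) = j := by
          have h3 : (σ ^ (kk j - (b - a) + (b - a))) (rep j) = j := by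
            rw [Nat.sub_add_cancel (by omega), hk_spec]
          rwa [pow_add, Equiv.Perm.mul_apply, hd] at h3
        exact hkk_min j (kk j - (b - a)) (by omega) hkd
      intro a ha b hb heq
      simp only [Finset.mem_range] at ha hb
      rcases lt_trichotomy a b with h | h | h
      · exact absurd heq (fun e => key a b h hb e)
      · exact h
      · exact absurd heq.symm (fun e => key b a h ha e)
    have hmod : ∀ m : ℕ, (σ ^ m) (rep j) = (σ ^ (m % (kk j + 1))) (rep j) := by
      intro m
      conv_lhs => rw [← Nat.mod_add_div m (kk j + 1)]
      rw [pow_add, Equiv.Perm.mul_apply, pow_mul]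
      congr 1
      exact Equiv.Perm.pow_apply_eq_self_of_apply_eq_self hperiod _
    have hsurj : ∀ b ∈ cycleFinset σ (rep j), ∃ a, ∃ _ : a ∈ Finset.range (kk j + 1),
        (σ ^ a) (rep j) = b := by
      intro b hb
      obtain ⟨m, -, hm⟩ := (mem_cycleFinset'.1 hb).exists_pow_eq'
      refine ⟨m % (kk j + 1), Finset.mem_range.2 (Nat.mod_lt _ (by omega)), ?_⟩
      rw [← hmod, hm]
    have hmaps : ∀ a ∈ Finset.range (kk j + 1), (σ ^ a) (rep j) ∈ cycleFinset σ (rep j) :=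
      fun a _ => mem_cycleFinset'.2 ⟨(a : ℤ), by rw [zpow_natCast]⟩
    have hbij : ∑ m ∈ Finset.range (kk j + 1), c ((σ ^ m) (rep j))
        = ∑ x ∈ cycleFinset σ (rep j), c x :=
      Finset.sum_bij (fun a _ => (σ ^ a) (rep j)) hmaps hinj hsurj (fun a _ => rfl)
    have hzero : ∑ m ∈ Finset.range (kk j + 1), c ((σ ^ m) (rep j)) = 0 := by
      rw [hbij, hsum (rep j)]
    rw [Finset.sum_range_succ, hk_spec] at hzero
    linear_combination (norm := abel1) -hzero

/-- The key construction lemma. -/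
lemma key' (hτ : τ * τ = 1) (hrev : τ * σ * τ⁻¹ = σ⁻¹)
    (c : Fin n → Circle1) (hc : ∀ j, c (σ⁻¹ (τ j)) = c j)
    (hsum : ∀ i, ∑ j ∈ cycleFinset σ i, c j = 0) :
    ∃ β : Fin n → Circle1, (∀ j, β (τ j) + β j = 0) ∧ ∀ j, β (σ j) = β j + c j := by
  classical
  obtain ⟨γ, hγ⟩ := exists_gamma' c hsum
  have hττ : ∀ j, τ (τ j) = j := by
    intro j
    have := congrArg (fun p : Equiv.Perm (Fin n) => p j) hτ
    simpa [Equiv.Perm.mul_apply] using this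
  have hτσ : ∀ j, τ (σ j) = σ⁻¹ (τ j) := by
    intro j
    have h1 : τ * σ = σ⁻¹ * τ := by
      rw [← hrev]; group
    have := congrArg (fun p : Equiv.Perm (Fin n) => p j) h1
    simpa [Equiv.Perm.mul_apply] using this
  -- e is constant on cycles and τ-invariant
  set e : Fin n → Circle1 := fun j => γ j + γ (τ j) with he_def
  have he_tau : ∀ j, e (τ j) = e j := by
    intro j; simp only [he_def, hττ]; exact add_comm _ _
  have he_sigma : ∀ j, e (σ j) = e j := by
    intro j
    have h2 : γ (τ j) = γ (σ⁻¹ (τ j)) + c j := by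
      have h3 := hγ (σ⁻¹ (τ j))
      rw [hc j] at h3
      rw [show σ (σ⁻¹ (τ j)) = τ j from σ.apply_symm_apply (τ j)] at h3
      exact h3
    simp only [he_def, hγ j, hτσ j, h2]
    abel
  have he_cycle : ∀ j j', σ.SameCycle j j' → e j = e j' := by
    have hnat : ∀ (m : ℕ) (j : Fin n), e ((σ ^ m) j) = e j := by
      intro m
      induction m with
      | zero => simp
      | succ m ih =>
        intro j
        rw [pow_succ', Equiv.Perm.mul_apply, he_sigma, ih]
    intro j j' h
    obtain ⟨m, -, hm⟩ := h.exists_pow_eq'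
    rw [← hm, hnat]
  -- representatives again
  have hne : ∀ j : Fin n, (cycleFinset σ j).Nonempty := fun j => ⟨j, self_mem_cycleFinset' j⟩
  let rep : Fin n → Fin n := fun j => (cycleFinset σ j).min' (hne j)
  have hrep_same : ∀ j, σ.SameCycle (rep j) j := fun j =>
    (mem_cycleFinset'.1 (Finset.min'_mem _ _)).symm
  have hrep_const : ∀ j j', σ.SameCycle j j' → rep j = rep j' := by
    intro j j' h
    have : cycleFinset σ j = cycleFinset σ j' := cycleFinset_eq' h
    simp only [rep]
    congr 1
  -- the half function
  choose half hhalf using exists_half'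
  -- ε
  let ε : Fin n → Circle1 := fun j =>
    if rep (τ j) = rep j then half (e (rep j))
    else if rep j < rep (τ j) then e j else 0
  have hε_tau : ∀ j, ε (τ j) + ε j = e j := by
    intro j
    by_cases hp : rep (τ j) = rep j
    · have hp' : rep (τ (τ j)) = rep (τ j) := by rw [hττ, hp]
      have v1 : ε j = half (e (rep j)) := by
        show (if rep (τ j) = rep j then half (e (rep j))
          else if rep j < rep (τ j) then e j else 0) = _
        rw [if_pos hp]
      have v2 : ε (τ j) = half (e (rep j)) := by
        show (if rep (τ (τ j)) = rep (τ j) then half (e (rep (τ j)))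
          else if rep (τ j) < rep (τ (τ j)) then e (τ j) else 0) = _
        rw [if_pos hp', hp]
      rw [v1, v2, hhalf]
      exact he_cycle (rep j) j (hrep_same j)
    · have v1 : ε j = if rep j < rep (τ j) then e j else 0 := by
        show (if rep (τ j) = rep j then half (e (rep j))
          else if rep j < rep (τ j) then e j else 0) = _
        rw [if_neg hp]
      have v2 : ε (τ j) = if rep (τ j) < rep j then e (τ j) else 0 := by
        show (if rep (τ (τ j)) = rep (τ j) then half (e (rep (τ j)))
          else if rep (τ j) < rep (τ (τ j)) then e (τ j) else 0) = _
        rw [hττ j, if_neg (fun h => hp h.symm)]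
      rw [v1, v2, he_tau]
      rcases lt_or_gt_of_ne (hp : rep (τ j) ≠ rep j) with h | h
      · rw [if_pos h, if_neg (not_lt.2 h.le), add_zero]
      · rw [if_neg (not_lt.2 h.le), if_pos h, zero_add]
  have hε_sigma : ∀ j, ε (σ j) = ε j := by
    intro j
    have h1 : rep (σ j) = rep j := (hrep_const _ _ sameCycle_apply').symm
    have h2 : rep (τ (σ j)) = rep (τ j) := by
      rw [hτσ]
      exact (hrep_const _ _ ⟨-1, by simp⟩).symm
    simp only [ε, h1, h2, he_sigma]
  refine ⟨fun j => γ j - ε j, ?_, ?_⟩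
  · intro j
    show γ (τ j) - ε (τ j) + (γ j - ε j) = 0
    have h4 : γ (τ j) - ε (τ j) + (γ j - ε j) = (γ j + γ (τ j)) - (ε (τ j) + ε j) := by abel
    rw [h4, hε_tau j]
    simp [he_def]
  · intro j
    show γ (σ j) - ε (σ j) = γ j - ε j + c j
    rw [hγ j, hε_sigma j]
    abel

end Aux

/-- **Theorem 1 (strong reversibility in `G_n`).**  Given `f = (α_f, σ_f) ∈ G_n` and an
involution `τ ∈ Sₙ` with `τ σ_f τ⁻¹ = σ_f⁻¹`, there is an involution `T ∈ G_n` with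
permutation part `τ` reversing `f` iff for every `i`,
`∑_{j ∈ S_i} α_j(f) + ∑_{j ∈ τ(S_i)} α_j(f) = 0`, where `S_i` is the `σ_f`-cycle of `i`. -/
theorem stmt0 {n : ℕ} (hn : 1 ≤ n) (f : Gn n) (τ : Equiv.Perm (Fin n))
    (hτinv : τ * τ = 1) (hτrev : τ * f.2 * τ⁻¹ = f.2⁻¹) :
    (∃ T : Gn n, T * T = 1 ∧ T.2 = τ ∧ T * f * T⁻¹ = f⁻¹) ↔
      ∀ i : Fin n,
        (∑ j ∈ Gn.cycleFinset f.2 i, f.1 j) +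
          ∑ j ∈ (Gn.cycleFinset f.2 i).image τ, f.1 j = 0 := by
  have hτ' : τ⁻¹ = τ := inv_eq_of_mul_eq_one_right hτinv
  have hττ : ∀ j, τ (τ j) = j := by
    intro j
    have := congrArg (fun p : Equiv.Perm (Fin n) => p j) hτinv
    simpa [Equiv.Perm.mul_apply] using this
  have h2 : f.2 * τ = τ * f.2⁻¹ := by
    rw [← hτrev, ← mul_assoc, ← mul_assoc, hτinv, one_mul, hτ']
  have hστ : ∀ x, f.2 (τ x) = τ (f.2⁻¹ x) := by
    intro x
    have := congrArg (fun p : Equiv.Perm (Fin n) => p x) h2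
    simpa [Equiv.Perm.mul_apply] using this
  have hkey_sum : ∀ i, (∑ j ∈ cycleFinset f.2 i, f.1 j)
      + ∑ j ∈ (cycleFinset f.2 i).image τ, f.1 j
      = - ∑ j ∈ cycleFinset f.2 i, (-f.1 j - f.1 (f.2⁻¹ (τ j))) :=
    cycle_sum_eq' f hτrev
  constructor
  · rintro ⟨T, hT2, hTτ, hTrev⟩
    intro i
    have hpt : ∀ x : Fin n, -T.1 (τ x) + (f.1 (τ x) + T.1 (f.2 (τ x))) = -f.1 (f.2⁻¹ x) := by
      intro x
      have h := congrFun (congrArg Prod.fst hTrev) x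
      simpa [hTτ, hτ'] using h
    have hβrel : ∀ j, T.1 (f.2 j) = T.1 j + (-f.1 j - f.1 (f.2⁻¹ (τ j))) := by
      intro j
      have h := hpt (τ j)
      rw [hττ] at h
      calc T.1 (f.2 j) = (-T.1 j + (f.1 j + T.1 (f.2 j))) + T.1 j - f.1 j := by abel
        _ = -f.1 (f.2⁻¹ (τ j)) + T.1 j - f.1 j := by rw [h]
        _ = T.1 j + (-f.1 j - f.1 (f.2⁻¹ (τ j))) := by abel
    have hzero : ∑ j ∈ cycleFinset f.2 i, (-f.1 j - f.1 (f.2⁻¹ (τ j))) = 0 := by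
      have h5 : ∑ j ∈ cycleFinset f.2 i, (T.1 (f.2 j) - T.1 j) = 0 := by
        rw [Finset.sum_sub_distrib, sum_cycle_comp', sub_self]
      calc ∑ j ∈ cycleFinset f.2 i, (-f.1 j - f.1 (f.2⁻¹ (τ j)))
          = ∑ j ∈ cycleFinset f.2 i, (T.1 (f.2 j) - T.1 j) :=
            Finset.sum_congr rfl (fun j _ => by rw [hβrel j]; abel)
        _ = 0 := h5
    rw [hkey_sum i, hzero, neg_zero]
  · intro hcond
    have hc : ∀ j, (fun j => -f.1 j - f.1 (f.2⁻¹ (τ j))) (f.2⁻¹ (τ j))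
        = (fun j => -f.1 j - f.1 (f.2⁻¹ (τ j))) j := by
      intro j
      have h6 : τ (f.2⁻¹ (τ j)) = f.2 j := by rw [← hστ, hττ]
      simp only []
      rw [h6, show f.2⁻¹ (f.2 j) = j from f.2.symm_apply_apply j]
      abel
    have hsum : ∀ i, ∑ j ∈ cycleFinset f.2 i, (-f.1 j - f.1 (f.2⁻¹ (τ j))) = 0 := by
      intro i
      have h7 := hcond i
      rw [hkey_sum i] at h7
      exact neg_eq_zero.1 h7
    obtain ⟨β, hβ1, hβ2⟩ := key' hτinv hτrev _ hc hsum
    refine ⟨(β, τ), ?_, rfl, ?_⟩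
    · refine Prod.ext (funext fun j => ?_) hτinv
      show β j + β (τ j) = 0
      rw [add_comm]; exact hβ1 j
    · refine Prod.ext (funext fun x => ?_) hτrev
      show -β (τ⁻¹ x) + (f.1 (τ⁻¹ x) + β (f.2 (τ⁻¹ x))) = -f.1 (f.2⁻¹ x)
      rw [hτ']
      have h8 := hβ2 (τ x)
      rw [h8]
      simp only [hττ]
      abel
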